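/- Let A be an algebra of (S,φ)-type with respect to a presentation (π, P) of the positive affine semigroup S, with generators b_1, ..., b_n and monomials 𝐛^ξ = b_1^{ξ_1} ⋯ b_n^{ξ_n}. Define F_l A = span{𝐛^ξ : φ̃(ξ) ≤ l} where φ̃ = φ ∘ π. Then for all ξ, ν ∈ ℕ^n there exists a nonzero scalar c_{ξ,ν} ∈ k^× such that 𝐛^ξ 𝐛^ν ≡ c_{ξ,ν} 𝐛^{ξ+ν} modulo F_{φ̃(ξ+ν)-1} A. In particular {F_l A} is a multiplicative filtration of A. -/

import Mathlib

/-- Ordered monomial `𝐛^ξ = b₁^{ξ₁} ⋯ bₙ^{ξₙ}` in a (noncommutative) ring. -/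
noncomputable def bpow {A : Type} [Ring A] {n : ℕ} (b : Fin n → A) (ξ : Fin n → ℕ) : A :=
  ((List.finRange n).map fun i => b i ^ ξ i).prod

/-- The canonical map `π : ℕ^n → S`, `ξ ↦ Σ ξ i • s i`. -/
def piMap {S : Type} [AddCommMonoid S] {n : ℕ} (s : Fin n → S) (ξ : Fin n → ℕ) : S :=
  ∑ i, ξ i • s i

/-- The filtration layer `F_l A = span { 𝐛^ξ : φ̃(ξ) ≤ l }`. -/
noncomputable def typeFilt (k : Type) [Field k] {A : Type} [Ring A] [Algebra k A]
    {S : Type} [AddCommMonoid S] {n : ℕ} (s : Fin n → S) (φ : S →+ ℕ)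
    (b : Fin n → A) (l : ℕ) : Submodule k A :=
  Submodule.span k {x | ∃ ξ : Fin n → ℕ, φ (piMap s ξ) ≤ l ∧ x = bpow b ξ}

namespace SPhi
variable {n : ℕ}

def cnt (L : List (Fin n)) : Fin n → ℕ := fun i => L.count i

def toList (ξ : Fin n → ℕ) : List (Fin n) :=
  (List.finRange n).flatMap fun i => List.replicate (ξ i) i

def invCount : List (Fin n) → ℕ
  | [] => 0
  | a :: l => l.countP (fun x => decide (x < a)) + invCount l

lemma cnt_nil : cnt ([] : List (Fin n)) = 0 := by funext i; simp [cnt]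

lemma cnt_cons (a : Fin n) (L : List (Fin n)) :
    cnt (a :: L) = cnt L + Pi.single a 1 := by
  funext i
  simp only [cnt, List.count_cons, Pi.add_apply, Pi.single_apply, beq_iff_eq]
  by_cases h : a = i
  · subst h; simp
  · simp [h, Ne.symm h]

lemma cnt_append (L1 L2 : List (Fin n)) : cnt (L1 ++ L2) = cnt L1 + cnt L2 := by
  funext i; simp [cnt, List.count_append]

lemma cnt_toList (ξ : Fin n → ℕ) : cnt (toList ξ) = ξ := by
  funext i
  simp only [cnt, toList, List.count_flatMap, Function.comp]
  rw [← List.ofFn_eq_map, List.sum_ofFn]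
  simp [List.count_replicate]

lemma toList_sorted (ξ : Fin n → ℕ) : (toList ξ).Pairwise (· ≤ ·) := by
  have key : ∀ l : List (Fin n), l.Pairwise (· ≤ ·) →
      (l.flatMap fun i => List.replicate (ξ i) i).Pairwise (· ≤ ·) := by
    intro l hl
    induction l with
    | nil => simp
    | cons a t ih =>
      have hl' := List.pairwise_cons.1 hl
      rw [List.flatMap_cons, List.pairwise_append]
      refine ⟨?_, ih hl'.2, ?_⟩
      · exact List.pairwise_replicate.2 (Or.inr (le_refl a))
      · intro x hx y hy
        obtain rfl := List.eq_of_mem_replicate hx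
        obtain ⟨i, hi, hyi⟩ := List.mem_flatMap.1 hy
        obtain rfl := List.eq_of_mem_replicate hyi
        exact hl'.1 _ hi
  exact key _ ((List.pairwise_lt_finRange n).imp le_of_lt)

lemma sorted_eq_toList (L : List (Fin n)) (h : L.Pairwise (· ≤ ·)) : L = toList (cnt L) := by
  apply List.Perm.eq_of_pairwise' h (toList_sorted _)
  rw [List.perm_iff_count]
  intro a
  exact (congrFun (cnt_toList (cnt L)) a).symm

lemma exists_desc (L : List (Fin n)) (h : ¬ L.Pairwise (· ≤ ·)) :
    ∃ (L1 : List (Fin n)) (i j : Fin n) (L2 : List (Fin n)),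
      i < j ∧ L = L1 ++ j :: i :: L2 := by
  induction L with
  | nil => exact absurd List.Pairwise.nil h
  | cons a t ih =>
    rcases t with _ | ⟨x, t'⟩
    · exact absurd (List.pairwise_singleton _ a) h
    · by_cases hax : a ≤ x
      · have ht : ¬ (x :: t').Pairwise (· ≤ ·) := by
          intro hs
          apply h
          rw [List.pairwise_cons]
          refine ⟨?_, hs⟩
          have hs' := List.pairwise_cons.1 hs
          intro y hy
          rcases List.mem_cons.1 hy with rfl | hy'
          · exact hax
          · exact hax.trans (hs'.1 y hy')
        obtain ⟨L1, i, j, L2, hij, heq⟩ := ih ht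
        exact ⟨a :: L1, i, j, L2, hij, by rw [List.cons_append, ← heq]⟩
      · exact ⟨[], x, a, t', lt_of_not_ge hax, rfl⟩

lemma invCount_swap (L1 L2 : List (Fin n)) {i j : Fin n} (hij : i < j) :
    invCount (L1 ++ i :: j :: L2) < invCount (L1 ++ j :: i :: L2) := by
  induction L1 with
  | nil =>
    simp only [List.nil_append, invCount, List.countP_cons]
    simp [hij, not_lt.2 hij.le]
    omega
  | cons a t ih =>
    simp only [List.cons_append, invCount]
    have hcount : (t ++ i :: j :: L2).countP (fun x => decide (x < a)) =
        (t ++ j :: i :: L2).countP (fun x => decide (x < a)) := by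
      simp only [List.countP_append, List.countP_cons]
      omega
    omega

section piMapLemmas
variable {S : Type} [AddCommMonoid S] (s : Fin n → S)

lemma piMap_zero : piMap s 0 = 0 := by simp [piMap]

lemma piMap_add (ξ ν : Fin n → ℕ) : piMap s (ξ + ν) = piMap s ξ + piMap s ν := by
  simp [piMap, add_smul, Finset.sum_add_distrib]

lemma piMap_single (a : Fin n) : piMap s (Pi.single a 1) = s a := by
  simp [piMap, Pi.single_apply]

lemma piMap_cnt (L : List (Fin n)) : piMap s (cnt L) = (L.map s).sum := by
  induction L with
  | nil => simp [cnt_nil, piMap_zero]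
  | cons a t ih =>
    rw [cnt_cons, piMap_add, piMap_single, ih, List.map_cons, List.sum_cons, add_comm]

lemma wt_eq (φ : S →+ ℕ) (L : List (Fin n)) :
    φ (piMap s (cnt L)) = (L.map fun i => φ (s i)).sum := by
  rw [piMap_cnt, map_list_sum, List.map_map]; rfl

end piMapLemmas

lemma prod_toList {A : Type} [Ring A] (b : Fin n → A) (ξ : Fin n → ℕ) :
    ((toList ξ).map b).prod = bpow b ξ := by
  rw [toList, List.map_flatMap, List.flatMap_def, List.prod_flatten, List.map_map, bpow]
  congr 1
  apply List.map_congr_left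
  intro a _
  simp [List.prod_replicate]


section Main
variable {k A S : Type} [Field k] [Ring A] [Algebra k A] [AddCancelCommMonoid S]
variable {n : ℕ} (s : Fin n → S) (φ : S →+ ℕ) (b : Fin n → A)

lemma bpow_mem {ξ : Fin n → ℕ} {l : ℕ} (h : φ (piMap s ξ) ≤ l) :
    bpow b ξ ∈ typeFilt k s φ b l :=
  Submodule.subset_span ⟨ξ, h, rfl⟩

lemma typeFilt_mono {l l' : ℕ} (h : l ≤ l') :
    typeFilt k s φ b l ≤ typeFilt k s φ b l' :=
  Submodule.span_mono fun _ ⟨ξ, h1, h2⟩ => ⟨ξ, h1.trans h, h2⟩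

theorem main_word
    (c : Fin n → Fin n → k) (hc : ∀ i j : Fin n, c i j ≠ 0)
    (cc : Fin n → Fin n → ((Fin n → ℕ) →₀ k))
    (hccsupp : ∀ (i j : Fin n) (ξ : Fin n → ℕ), cc i j ξ ≠ 0 →
      φ (piMap s ξ) < φ (s i + s j))
    (hcomm : ∀ i j : Fin n, i < j →
      b j * b i = c i j • (b i * b j) + (cc i j).sum fun ξ a => a • bpow b ξ) :
    ∀ (W : ℕ) (L : List (Fin n)), φ (piMap s (cnt L)) ≤ W →
      ∃ γ : k, γ ≠ 0 ∧
        (L.map b).prod - γ • bpow b (cnt L) ∈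
          typeFilt k s φ b (φ (piMap s (cnt L)) - 1) := by
  have hψ : ∀ a b : Fin n → ℕ,
      φ (piMap s (a + b)) = φ (piMap s a) + φ (piMap s b) := by
    intro a b; rw [piMap_add, map_add]
  intro W
  induction W using Nat.strong_induction_on with
  | _ W IHW =>
  suffices h : ∀ (I : ℕ) (L : List (Fin n)), invCount L ≤ I → φ (piMap s (cnt L)) ≤ W →
      ∃ γ : k, γ ≠ 0 ∧ (L.map b).prod - γ • bpow b (cnt L) ∈
        typeFilt k s φ b (φ (piMap s (cnt L)) - 1) by
    intro L hL; exact h (invCount L) L le_rfl hL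
  intro I
  induction I using Nat.strong_induction_on with
  | _ I IHI =>
  intro L hinv hwt
  by_cases hsort : L.Pairwise (· ≤ ·)
  · refine ⟨1, one_ne_zero, ?_⟩
    have hprod : (L.map b).prod = bpow b (cnt L) := by
      conv_lhs => rw [sorted_eq_toList L hsort]
      exact prod_toList b (cnt L)
    rw [hprod, one_smul, sub_self]
    exact zero_mem _
  · obtain ⟨L1, i, j, L2, hij, rfl⟩ := exists_desc L hsort
    have hcnt : cnt (L1 ++ i :: j :: L2) = cnt (L1 ++ j :: i :: L2) := by
      simp only [cnt_append, cnt_cons]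
      abel
    have hinv' : invCount (L1 ++ i :: j :: L2) < I :=
      lt_of_lt_of_le (invCount_swap L1 L2 hij) hinv
    obtain ⟨γ', hγ', hf'⟩ := IHI (invCount (L1 ++ i :: j :: L2)) hinv'
      (L1 ++ i :: j :: L2) le_rfl (by rw [hcnt]; exact hwt)
    rw [hcnt] at hf'
    have hword : ((L1 ++ j :: i :: L2).map b).prod
        = (L1.map b).prod * ((b j * b i) * (L2.map b).prod) := by
      simp [List.map_append, List.prod_append, mul_assoc]
    have hword' : ((L1 ++ i :: j :: L2).map b).prod
        = (L1.map b).prod * ((b i * b j) * (L2.map b).prod) := by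
      simp [List.map_append, List.prod_append, mul_assoc]
    have hwtL : φ (piMap s (cnt (L1 ++ j :: i :: L2)))
        = φ (piMap s (cnt L1)) + (φ (piMap s (cnt L2)) + (φ (s i) + φ (s j))) := by
      rw [cnt_append, cnt_cons, cnt_cons, hψ, hψ, hψ, piMap_single, piMap_single]
      ring
    have herr : ∀ ξ : Fin n → ℕ, cc i j ξ ≠ 0 →
        (L1.map b).prod * (bpow b ξ * (L2.map b).prod) ∈
          typeFilt k s φ b (φ (piMap s (cnt (L1 ++ j :: i :: L2))) - 1) := by
      intro ξ hξ
      have hlt := hccsupp i j ξ hξ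
      rw [map_add] at hlt
      have hpe : (L1.map b).prod * (bpow b ξ * (L2.map b).prod)
          = ((L1 ++ (toList ξ ++ L2)).map b).prod := by
        simp [List.map_append, List.prod_append, prod_toList, mul_assoc]
      have hwte : φ (piMap s (cnt (L1 ++ (toList ξ ++ L2))))
          = φ (piMap s (cnt L1)) + (φ (piMap s ξ) + φ (piMap s (cnt L2))) := by
        rw [cnt_append, cnt_append, cnt_toList, hψ, hψ]
      have hlt2 : φ (piMap s (cnt (L1 ++ (toList ξ ++ L2))))
          < φ (piMap s (cnt (L1 ++ j :: i :: L2))) := by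
        rw [hwte, hwtL]; omega
      obtain ⟨γ'', hγ'', hf''⟩ := IHW (φ (piMap s (cnt (L1 ++ (toList ξ ++ L2)))))
        (lt_of_lt_of_le hlt2 hwt) (L1 ++ (toList ξ ++ L2)) le_rfl
      have h1 : bpow b (cnt (L1 ++ (toList ξ ++ L2))) ∈
          typeFilt k s φ b (φ (piMap s (cnt (L1 ++ j :: i :: L2))) - 1) :=
        bpow_mem s φ b (by omega)
      have h2 := typeFilt_mono s φ b
        (show φ (piMap s (cnt (L1 ++ (toList ξ ++ L2)))) - 1
            ≤ φ (piMap s (cnt (L1 ++ j :: i :: L2))) - 1 by omega) hf''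
      rw [hpe]
      have h3 : ((L1 ++ (toList ξ ++ L2)).map b).prod
          = (((L1 ++ (toList ξ ++ L2)).map b).prod
              - γ'' • bpow b (cnt (L1 ++ (toList ξ ++ L2))))
            + γ'' • bpow b (cnt (L1 ++ (toList ξ ++ L2))) := by abel
      rw [h3]
      exact add_mem h2 (Submodule.smul_mem _ _ h1)
    have hE : (L1.map b).prod * (((cc i j).sum fun ξ a => a • bpow b ξ) * (L2.map b).prod)
        ∈ typeFilt k s φ b (φ (piMap s (cnt (L1 ++ j :: i :: L2))) - 1) := by
      rw [Finsupp.sum, Finset.sum_mul, Finset.mul_sum]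
      apply Submodule.sum_mem
      intro ξ hξ
      rw [smul_mul_assoc, mul_smul_comm]
      exact Submodule.smul_mem _ _ (herr ξ (Finsupp.mem_support_iff.1 hξ))
    refine ⟨c i j * γ', mul_ne_zero (hc i j) hγ', ?_⟩
    have key : ((L1 ++ j :: i :: L2).map b).prod
          - (c i j * γ') • bpow b (cnt (L1 ++ j :: i :: L2))
        = c i j • (((L1 ++ i :: j :: L2).map b).prod
            - γ' • bpow b (cnt (L1 ++ j :: i :: L2)))
          + (L1.map b).prod * (((cc i j).sum fun ξ a => a • bpow b ξ) * (L2.map b).prod) := by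
      rw [hword, hword', hcomm i j hij, add_mul, mul_add]
      rw [smul_mul_assoc, mul_smul_comm, smul_sub, smul_smul]
      abel
    rw [key]
    exact add_mem (Submodule.smul_mem _ _ hf') hE

end Main
end SPhi

/-- Let `A` be an algebra of `(S,φ)`-type with respect to a
presentation `(π, P)` of the positive affine semigroup `S` (Hilbert basis
`s 1, ..., s n`, `P` a finite family generating the congruence `ker π`), with
generators `b 1, ..., b n`. Then for all `ξ, ν ∈ ℕ^n` there is a nonzero scalar
`γ` with `𝐛^ξ 𝐛^ν ≡ γ 𝐛^{ξ+ν}` modulo `F_{φ̃(ξ+ν)-1} A`; in particular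
`{F_l A}` is a multiplicative filtration of `A`. -/
theorem s_phi_type_filtration
    (k : Type) [Field k] (A : Type) [Ring A] [Algebra k A]
    (S : Type) [AddCancelCommMonoid S]
    (n m : ℕ) (s : Fin n → S)
    (hsurj : Function.Surjective (piMap s))
    (hs : Set.range s = {t : S | t ≠ 0 ∧ ∀ x y : S, t = x + y → x = 0 ∨ y = 0})
    (φ : S →+ ℕ) (hφ : ∀ t : S, φ t = 0 → t = 0)
    (P : Fin m → (Fin n → ℕ) × (Fin n → ℕ))
    (hP : ∀ ξ ν : Fin n → ℕ,
      addConGen (fun a b => ∃ i : Fin m, a = (P i).1 ∧ b = (P i).2) ξ ν ↔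
        piMap s ξ = piMap s ν)
    (b : Fin n → A) (hgen : Algebra.adjoin k (Set.range b) = ⊤)
    (c : Fin n → Fin n → k) (hc : ∀ i j : Fin n, c i j ≠ 0)
    (cc : Fin n → Fin n → ((Fin n → ℕ) →₀ k))
    (hccsupp : ∀ (i j : Fin n) (ξ : Fin n → ℕ), cc i j ξ ≠ 0 →
      φ (piMap s ξ) < φ (s i + s j))
    (hcomm : ∀ i j : Fin n, i < j →
      b j * b i = c i j • (b i * b j) + (cc i j).sum fun ξ a => a • bpow b ξ)
    (d : Fin m → k) (hd : ∀ i, d i ≠ 0)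
    (dd : Fin m → ((Fin n → ℕ) →₀ k))
    (hddsupp : ∀ (i : Fin m) (ξ : Fin n → ℕ), dd i ξ ≠ 0 →
      φ (piMap s ξ) < φ (piMap s (P i).1))
    (hstr : ∀ i : Fin m,
      bpow b (P i).2 = d i • bpow b (P i).1 + (dd i).sum fun ξ a => a • bpow b ξ) :
    (∀ ξ ν : Fin n → ℕ, ∃ γ : k, γ ≠ 0 ∧
      bpow b ξ * bpow b ν - γ • bpow b (ξ + ν) ∈
        typeFilt k s φ b (φ (piMap s (ξ + ν)) - 1)) ∧
    (∀ l l' : ℕ, ∀ x ∈ typeFilt k s φ b l, ∀ y ∈ typeFilt k s φ b l',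
      x * y ∈ typeFilt k s φ b (l + l')) := by
  classical
  have hψ : ∀ a b : Fin n → ℕ,
      φ (piMap s (a + b)) = φ (piMap s a) + φ (piMap s b) := by
    intro a b; rw [SPhi.piMap_add, map_add]
  have part1 : ∀ ξ ν : Fin n → ℕ, ∃ γ : k, γ ≠ 0 ∧
      bpow b ξ * bpow b ν - γ • bpow b (ξ + ν) ∈
        typeFilt k s φ b (φ (piMap s (ξ + ν)) - 1) := by
    intro ξ ν
    have hcnt : SPhi.cnt (SPhi.toList ξ ++ SPhi.toList ν) = ξ + ν := by
      rw [SPhi.cnt_append, SPhi.cnt_toList, SPhi.cnt_toList]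
    obtain ⟨γ, hγ, hf⟩ := SPhi.main_word s φ b c hc cc hccsupp hcomm
      (φ (piMap s (ξ + ν))) (SPhi.toList ξ ++ SPhi.toList ν) (by rw [hcnt])
    rw [hcnt] at hf
    have hp : ((SPhi.toList ξ ++ SPhi.toList ν).map b).prod = bpow b ξ * bpow b ν := by
      rw [List.map_append, List.prod_append, SPhi.prod_toList, SPhi.prod_toList]
    rw [hp] at hf
    exact ⟨γ, hγ, hf⟩
  refine ⟨part1, ?_⟩
  intro l l' x hx y hy
  have hxy : x * y ∈ typeFilt k s φ b l * typeFilt k s φ b l' :=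
    Submodule.mul_mem_mul hx hy
  rw [typeFilt, typeFilt, Submodule.span_mul_span] at hxy
  refine Submodule.span_le.2 ?_ hxy
  rintro z ⟨z1, hz1, z2, hz2, rfl⟩
  obtain ⟨ξ, hξ, rfl⟩ := hz1
  obtain ⟨ν, hν, rfl⟩ := hz2
  obtain ⟨γ, hγ, hf⟩ := part1 ξ ν
  have hsum : φ (piMap s (ξ + ν)) ≤ l + l' := by rw [hψ]; omega
  have h1 : bpow b (ξ + ν) ∈ typeFilt k s φ b (l + l') :=
    SPhi.bpow_mem s φ b hsum
  have h2 := SPhi.typeFilt_mono s φ b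
    (show φ (piMap s (ξ + ν)) - 1 ≤ l + l' by omega) hf
  have h3 : bpow b ξ * bpow b ν
      = (bpow b ξ * bpow b ν - γ • bpow b (ξ + ν)) + γ • bpow b (ξ + ν) := by abel
  show bpow b ξ * bpow b ν ∈ typeFilt k s φ b (l + l')
  rw [h3]
  exact add_mem h2 (Submodule.smul_mem _ _ h1)
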